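/- Let X be a separable Banach space, (Ω, F, P) a probability space with filtration (F_n : 0 ≤ n ≤ N), and (f_n : 0 ≤ n ≤ N) an X-valued martingale with respect to this filtration. Then for every ε > 0 there exists a filtration (G_n : 0 ≤ n ≤ N) such that each G_n is countably generated by a countable partition into atoms, G_n ⊆ F_n, and ‖f_n − E(f_N | G_n)‖ < ε for all 0 ≤ n ≤ N (the norm being the essential supremum of the X-norm). -/

import Mathlib

open MeasureTheory

/-- Conditional expectation commutes with continuous linear maps. -/
theorem condexp_clm_comm {Ω : Type*} {m m0 : MeasurableSpace Ω} {μ : Measure Ω}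
    {X : Type*} [NormedAddCommGroup X] [NormedSpace ℝ X] [CompleteSpace X]
    (hm : m ≤ m0) [SigmaFinite (μ.trim hm)]
    {h : Ω → X} (hint : Integrable h μ) (φ : X →L[ℝ] ℝ) :
    (fun ω => φ ((μ[h|m]) ω)) =ᵐ[μ] μ[fun ω => φ (h ω)|m] := by
  refine ae_eq_condExp_of_forall_setIntegral_eq hm (φ.integrable_comp hint)
    (fun s _ _ => (φ.integrable_comp integrable_condExp).integrableOn)
    (fun s hs hμs => ?_) ?_
  · rw [ContinuousLinearMap.integral_comp_comm φ integrable_condExp.integrableOn,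
      setIntegral_condExp hm hint hs,
      ContinuousLinearMap.integral_comp_comm φ hint.integrableOn]
  · exact (φ.continuous.comp_stronglyMeasurable stronglyMeasurable_condExp).aestronglyMeasurable

/-- A.e. norm bound for Banach-valued conditional expectation. -/
theorem ae_norm_condexp_le {Ω : Type*} {m m0 : MeasurableSpace Ω} {μ : Measure Ω}
    [IsFiniteMeasure μ] {X : Type*} [NormedAddCommGroup X] [NormedSpace ℝ X]
    [CompleteSpace X] [TopologicalSpace.SeparableSpace X]
    (hm : m ≤ m0) {h : Ω → X} (hint : Integrable h μ)
    {C : ℝ} (hC : 0 ≤ C) (hb : ∀ᵐ ω ∂μ, ‖h ω‖ ≤ C) :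
    ∀ᵐ ω ∂μ, ‖(μ[h|m]) ω‖ ≤ C := by
  haveI : Nonempty X := ⟨0⟩
  haveI := isFiniteMeasure_trim (μ := μ) hm
  set d := TopologicalSpace.denseSeq X with hd_def
  have hd : DenseRange d := TopologicalSpace.denseRange_denseSeq X
  have hφex : ∀ j : ℕ, ∃ φ : X →L[ℝ] ℝ, ‖φ‖ ≤ 1 ∧ φ (d j) = ‖d j‖ := by
    intro j
    by_cases hj : d j = 0
    · exact ⟨0, by simp, by simp [hj]⟩
    · obtain ⟨φ, h1, h2⟩ := exists_dual_vector ℝ (d j) (norm_ne_zero_iff.mpr hj)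
      exact ⟨φ, le_of_eq h1, by simpa using h2⟩
  choose φ hφ1 hφ2 using hφex
  have norming : ∀ x : X, (∀ j, φ j x ≤ C) → ‖x‖ ≤ C := by
    intro x hx
    refine le_of_forall_pos_le_add fun η hη => ?_
    obtain ⟨j, hj⟩ : ∃ j, dist x (d j) < η / 2 := by
      have := Metric.mem_closure_range_iff.1 (hd x)
      exact this (η / 2) (by linarith)
    have h1 : ‖x‖ ≤ ‖d j‖ + η / 2 := by
      calc ‖x‖ ≤ ‖d j‖ + ‖x - d j‖ := norm_le_insert' x (d j)
        _ ≤ ‖d j‖ + η / 2 := by rw [← dist_eq_norm] at *; linarith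
    have h2 : ‖d j‖ ≤ C + η / 2 := by
      have : φ j (d j) = φ j x + φ j (d j - x) := by rw [← map_add]; congr 1; abel
      have hbd : φ j (d j - x) ≤ η / 2 := by
        calc φ j (d j - x) ≤ |φ j (d j - x)| := le_abs_self _
          _ ≤ ‖φ j‖ * ‖d j - x‖ := (φ j).le_opNorm _
          _ ≤ 1 * (η / 2) := by
              refine mul_le_mul (hφ1 j) ?_ (norm_nonneg _) zero_le_one
              rw [← dist_eq_norm, dist_comm]; exact hj.le
          _ = η / 2 := one_mul _
      rw [← hφ2 j, this]
      linarith [hx j]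
    linarith
  have key : ∀ j : ℕ, ∀ᵐ ω ∂μ, φ j ((μ[h|m]) ω) ≤ C := by
    intro j
    have hb' : ∀ᵐ ω ∂μ, |φ j (h ω)| ≤ (⟨C, hC⟩ : NNReal) := by
      filter_upwards [hb] with ω hω
      calc |φ j (h ω)| ≤ ‖φ j‖ * ‖h ω‖ := (φ j).le_opNorm _
        _ ≤ 1 * C := mul_le_mul (hφ1 j) hω (norm_nonneg _) zero_le_one
        _ = C := one_mul _
    have hbdd := ae_bdd_condExp_of_ae_bdd (m := m) hb'
    filter_upwards [hbdd, condexp_clm_comm hm hint (φ j)] with ω h1 h2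
    rw [h2]
    exact (le_abs_self _).trans h1
  filter_upwards [ae_all_iff.2 key] with ω hω
  exact norming _ hω

/-- Approximation of a Banach-valued martingale by a martingale with respect to an
atomic filtration: Proposition 1 (one-parameter approximation). -/
theorem martingale_atomic_approximation
    {Ω : Type*} {m : MeasurableSpace Ω} {μ : Measure Ω} [IsProbabilityMeasure μ]
    {X : Type*} [NormedAddCommGroup X] [NormedSpace ℝ X] [CompleteSpace X]
    [TopologicalSpace.SeparableSpace X]
    (N : ℕ) (ℱ : MeasureTheory.Filtration ℕ m)
    (f : ℕ → Ω → X) (hf : Martingale f ℱ μ)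
    (ε : ℝ) (hε : 0 < ε) :
    ∃ 𝒢 : ℕ → MeasurableSpace Ω,
      -- `𝒢` is a filtration
      (∀ n, 𝒢 n ≤ 𝒢 (n + 1)) ∧
      -- each `𝒢 n` is atomic: generated by a countable measurable partition into atoms
      (∀ n, ∃ (ι : Type) (_ : Countable ι) (p : ι → Set Ω),
        Pairwise (Function.onFun Disjoint p) ∧ (⋃ k, p k) = Set.univ ∧
        𝒢 n = MeasurableSpace.generateFrom (Set.range p)) ∧
      -- `𝒢 n` is a sub-σ-field of `ℱ n`
      (∀ n, 𝒢 n ≤ ℱ n) ∧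
      -- the approximation property, in essential supremum norm
      (∀ n ≤ N, eLpNorm (fun ω => f n ω - (μ[f N | 𝒢 n]) ω) ⊤ μ < ENNReal.ofReal ε) := by
  classical
  haveI : Nonempty X := ⟨0⟩
  set δ := ε / 3 with hδdef
  have hδ : 0 < δ := by positivity
  set d := TopologicalSpace.denseSeq X with hd_def
  have hd : DenseRange d := TopologicalSpace.denseRange_denseSeq X
  have hex : ∀ (n : ℕ) (ω : Ω), ∃ j, dist (f n ω) (d j) < δ := fun n ω =>
    Metric.mem_closure_range_iff.1 (hd (f n ω)) δ hδ
  set k : ℕ → Ω → ℕ := fun n ω => Nat.find (hex n ω) with hk_def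
  have hkdist : ∀ n ω, dist (f n ω) (d (k n ω)) < δ := fun n ω => Nat.find_spec (hex n ω)
  have hkmeas : ∀ n, Measurable[ℱ n] (k n) := by
    intro n
    letI : MeasurableSpace Ω := ℱ n
    refine measurable_find _ (fun j => ?_)
    have hsm : StronglyMeasurable[ℱ n] fun ω => dist (f n ω) (d j) :=
      (hf.stronglyAdapted n).dist stronglyMeasurable_const
    exact measurableSet_lt hsm.measurable measurable_const
  set g : ℕ → Ω → X := fun n ω => d (k n ω) with hg_def
  have hg_close : ∀ n ω, ‖f n ω - g n ω‖ ≤ δ := fun n ω => by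
    rw [← dist_eq_norm]; exact (hkdist n ω).le
  set p : (n : ℕ) → (Fin (n + 1) → ℕ) → Set Ω :=
    fun n v => {ω | ∀ i : Fin (n + 1), k i ω = v i} with hp_def
  have hp_mem : ∀ n ω, ω ∈ p n (fun i => k i ω) := fun n ω i => rfl
  set 𝒢 : ℕ → MeasurableSpace Ω :=
    fun n => MeasurableSpace.generateFrom (Set.range (p n)) with h𝒢_def
  have h𝒢F : ∀ n, 𝒢 n ≤ ℱ n := by
    intro n
    refine MeasurableSpace.generateFrom_le ?_
    rintro s ⟨v, rfl⟩
    have hpv : p n v = ⋂ i : Fin (n + 1), (k i) ⁻¹' {v i} := by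
      ext ω; simp [hp_def, Set.mem_iInter]
    rw [hpv]
    exact MeasurableSet.iInter fun i =>
      ℱ.mono i.is_le _ (hkmeas i (measurableSet_singleton (v i)))
  have h𝒢mono : ∀ n, 𝒢 n ≤ 𝒢 (n + 1) := by
    intro n
    refine MeasurableSpace.generateFrom_le ?_
    rintro s ⟨v, rfl⟩
    have hpv : p n v = ⋃ j : ℕ, p (n + 1) (Fin.snoc v j) := by
      ext ω
      simp only [hp_def, Set.mem_setOf_eq, Set.mem_iUnion]
      constructor
      · intro hv
        refine ⟨k (n + 1) ω, fun i => ?_⟩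
        induction i using Fin.lastCases with
        | last => rw [Fin.snoc_last]
        | cast i => rw [Fin.snoc_castSucc]; simpa using hv i
      · rintro ⟨j, hj⟩ i
        have := hj i.castSucc
        rwa [Fin.snoc_castSucc, Fin.coe_castSucc] at this
    rw [hpv]
    exact MeasurableSet.iUnion fun j =>
      MeasurableSpace.measurableSet_generateFrom ⟨_, rfl⟩
  have hp_disj : ∀ n, Pairwise (Function.onFun Disjoint (p n)) := by
    intro n v w hvw
    rw [Function.onFun, Set.disjoint_left]
    intro ω hv hw
    exact hvw (funext fun i => (hv i).symm.trans (hw i))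
  have hp_cover : ∀ n, (⋃ v, p n v) = Set.univ := fun n =>
    Set.eq_univ_of_forall fun ω => Set.mem_iUnion.2 ⟨_, hp_mem n ω⟩
  have hk𝒢 : ∀ n, ∀ i ≤ n, Measurable[𝒢 n] (k i) := by
    intro n i hi
    letI : MeasurableSpace Ω := 𝒢 n
    refine measurable_to_countable' fun j => ?_
    have hpre : k i ⁻¹' {j}
        = ⋃ v : {v : Fin (n + 1) → ℕ // v ⟨i, Nat.lt_succ_of_le hi⟩ = j}, p n v := by
      ext ω
      simp only [Set.mem_preimage, Set.mem_singleton_iff, Set.mem_iUnion]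
      constructor
      · intro hj
        exact ⟨⟨fun i' => k i' ω, hj⟩, hp_mem n ω⟩
      · rintro ⟨⟨v, hv⟩, hω⟩
        rw [← hv]
        exact hω ⟨i, Nat.lt_succ_of_le hi⟩
    rw [hpre]
    exact MeasurableSet.iUnion fun v =>
      MeasurableSpace.measurableSet_generateFrom ⟨_, rfl⟩
  borelize X
  have hg_sm : ∀ n, StronglyMeasurable[𝒢 n] (g n) := fun n =>
    (measurable_from_nat.comp (hk𝒢 n n le_rfl)).stronglyMeasurable
  have hle : ∀ n, 𝒢 n ≤ m := fun n => (h𝒢F n).trans (ℱ.le n)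
  have hg_int : ∀ n, Integrable (g n) μ := by
    intro n
    refine Integrable.mono' ((hf.integrable n).norm.add (integrable_const δ))
      (((hg_sm n).mono (hle n)).aestronglyMeasurable) (ae_of_all _ fun ω => ?_)
    calc ‖g n ω‖ = ‖f n ω - (f n ω - g n ω)‖ := by rw [sub_sub_cancel]
      _ ≤ ‖f n ω‖ + ‖f n ω - g n ω‖ := norm_sub_le _ _
      _ ≤ ‖f n ω‖ + δ := add_le_add le_rfl (hg_close n ω)
  refine ⟨𝒢, h𝒢mono, fun n => ⟨Fin (n + 1) → ℕ, inferInstance, p n, hp_disj n, hp_cover n, rfl⟩,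
    h𝒢F, ?_⟩
  intro n hnN
  haveI : SigmaFinite (μ.trim (hle n)) := (isFiniteMeasure_trim (hle n)).toSigmaFinite
  haveI : SigmaFinite (μ.trim (ℱ.le n)) := (isFiniteMeasure_trim (ℱ.le n)).toSigmaFinite
  have e1 : μ[f N|𝒢 n] =ᵐ[μ] μ[f n|𝒢 n] :=
    (condExp_condExp_of_le (h𝒢F n) (ℱ.le n)).symm.trans
      (condExp_congr_ae (hf.condExp_ae_eq hnN))
  have e2 : μ[g n|𝒢 n] = g n :=
    condExp_of_stronglyMeasurable (hle n) (hg_sm n) (hg_int n)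
  have e3 : μ[f n - g n|𝒢 n] =ᵐ[μ] μ[f n|𝒢 n] - g n := by
    have := condExp_sub (m := 𝒢 n) (μ := μ) (hf.integrable n) (hg_int n)
    rwa [e2] at this
  have hbound : ∀ᵐ ω ∂μ, ‖(μ[f n - g n|𝒢 n]) ω‖ ≤ δ :=
    ae_norm_condexp_le (hle n) ((hf.integrable n).sub (hg_int n)) hδ.le
      (ae_of_all _ fun ω => hg_close n ω)
  have hae : ∀ᵐ ω ∂μ, ‖f n ω - (μ[f N|𝒢 n]) ω‖ ≤ δ + δ := by
    filter_upwards [e1, e3, hbound] with ω h1 h3 hb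
    have hsplit : f n ω - (μ[f N|𝒢 n]) ω
        = (f n ω - g n ω) - ((μ[f n|𝒢 n]) ω - g n ω) := by rw [h1]; abel
    rw [hsplit]
    calc ‖(f n ω - g n ω) - ((μ[f n|𝒢 n]) ω - g n ω)‖
        ≤ ‖f n ω - g n ω‖ + ‖(μ[f n|𝒢 n]) ω - g n ω‖ := norm_sub_le _ _
      _ ≤ δ + δ := by
          refine add_le_add (hg_close n ω) ?_
          have : (μ[f n - g n|𝒢 n]) ω = (μ[f n|𝒢 n]) ω - g n ω := h3
          rw [← this]; exact hb
  calc eLpNorm (fun ω => f n ω - (μ[f N|𝒢 n]) ω) ⊤ μ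
      = eLpNormEssSup (fun ω => f n ω - (μ[f N|𝒢 n]) ω) μ := eLpNorm_exponent_top
    _ ≤ ENNReal.ofReal (δ + δ) := eLpNormEssSup_le_of_ae_bound hae
    _ < ENNReal.ofReal ε := by
        rw [ENNReal.ofReal_lt_ofReal_iff hε]
        rw [hδdef]; linarith
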